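/- Let X be a multiplicative archimedean prestreak and a, b, x ∈ X. If x > 0 then a < b ⟺ a·x < b·x, and if x < 0 then a < b ⟺ b·x < a·x. -/
import Mathlib


/-- A prestreak: a strict order (asymmetric and cotransitive) together with a
commutative additive monoid structure and a commutative multiplicative monoid
structure on the positive part, compatible with the order.  (The intrinsic
topology conditions of the paper are omitted, being vacuous in the classical
set-theoretic setting.) -/
structure Prestreak (X : Type*) where
  lt : X → X → Prop
  add : X → X → X
  zero : X
  mul : X → X → X
  one : X
  lt_asymm : ∀ a b, ¬ (lt a b ∧ lt b a)
  lt_cotrans : ∀ a b x, lt a b → lt a x ∨ lt x b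
  add_comm : ∀ a b, add a b = add b a
  add_assoc : ∀ a b c, add (add a b) c = add a (add b c)
  add_zero : ∀ a, add a zero = a
  zero_lt_one : lt zero one
  mul_pos : ∀ a b, lt zero a → lt zero b → lt zero (mul a b)
  mul_comm : ∀ a b, lt zero a → lt zero b → mul a b = mul b a
  mul_assoc : ∀ a b c, lt zero a → lt zero b → lt zero c →
    mul (mul a b) c = mul a (mul b c)
  mul_one : ∀ a, lt zero a → mul a one = a
  mul_add : ∀ a b c, lt zero a → lt zero b → lt zero c →
    mul (add a b) c = add (mul a c) (mul b c)
  add_lt_add_iff : ∀ a b x, (lt (add a x) (add b x) ↔ lt a b)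
  mul_lt_mul_iff : ∀ a b x, lt zero a → lt zero b → lt zero x →
    (lt (mul a x) (mul b x) ↔ lt a b)

namespace Prestreak

variable {X : Type*}

/-- Multiplication by a natural number: `0·a = 0`, `(n+1)·a = n·a + a`. -/
def nsmul (P : Prestreak X) : ℕ → X → X
  | 0, _ => P.zero
  | n + 1, a => P.add (nsmul P n a) a

/-- The canonical image of a natural number, `n ↦ n·1`. -/
def ofNat (P : Prestreak X) (n : ℕ) : X := P.nsmul n P.one

/-- Comparison `x < q` of an element of a prestreak with a rational number,
using the canonical representation `q = (q.num⁺ − q.num⁻)/q.den`: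
`x < (a−b)/c  :=  c·x + b < a`. -/
def ltQ (P : Prestreak X) (x : X) (q : ℚ) : Prop :=
  P.lt (P.add (P.nsmul q.den x) (P.ofNat ((-q.num).toNat))) (P.ofNat q.num.toNat)

/-- Comparison `q < x` of a rational with an element of a prestreak:
`(a−b)/c < x  :=  a < c·x + b`. -/
def qLt (P : Prestreak X) (q : ℚ) (x : X) : Prop :=
  P.lt (P.ofNat q.num.toNat) (P.add (P.nsmul q.den x) (P.ofNat ((-q.num).toNat)))

/-- The archimedean property for prestreaks. -/
def Archimedean (P : Prestreak X) : Prop :=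
  ∀ a b c d : X, P.lt b d →
    ∃ n : ℕ, P.lt (P.add a (P.nsmul n b)) (P.add c (P.nsmul n d))

/-- Tightness: antisymmetry of `≤` (where `a ≤ b := ¬ b < a`).
A streak is a tight archimedean prestreak. -/
def Tight (P : Prestreak X) : Prop :=
  ∀ a b : X, ¬ P.lt a b → ¬ P.lt b a → a = b

/-- The apartness relation `a # b := a < b ∨ b < a`. -/
def Apart (P : Prestreak X) (a b : X) : Prop := P.lt a b ∨ P.lt b a

/-- A morphism of prestreaks: preserves `<`, `+`, `0`, `1` and products of
positive elements. -/
def IsHom {Y : Type*} (P : Prestreak X) (Q : Prestreak Y) (f : X → Y) : Prop :=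
  (∀ a b, P.lt a b → Q.lt (f a) (f b)) ∧
  (∀ a b, f (P.add a b) = Q.add (f a) (f b)) ∧
  f P.zero = Q.zero ∧ f P.one = Q.one ∧
  (∀ a b, P.lt P.zero a → P.lt P.zero b → f (P.mul a b) = Q.mul (f a) (f b))

/-- A multiplicative structure on a prestreak: a total multiplication which is
commutative, associative, distributes over addition, has unit `1`, restricts to
the given multiplication on positive elements, and satisfies the multiplicity
condition. -/
def IsMultiplicative (P : Prestreak X) (tmul : X → X → X) : Prop :=
  (∀ a b, tmul a b = tmul b a) ∧
  (∀ a b c, tmul (tmul a b) c = tmul a (tmul b c)) ∧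
  (∀ a b c, tmul (P.add a b) c = P.add (tmul a c) (tmul b c)) ∧
  (∀ a, tmul a P.one = a) ∧
  (∀ a b, P.lt P.zero a → P.lt P.zero b → tmul a b = P.mul a b) ∧
  (∀ a b c d, P.lt b a → P.lt d c →
    P.lt (P.add (tmul a d) (tmul b c)) (P.add (tmul a c) (tmul b d)))

end Prestreak

section Helpers

variable {X : Type*}

lemma PS.irrefl (P : Prestreak X) (a : X) : ¬ P.lt a a :=
  fun h => P.lt_asymm a a ⟨h, h⟩

lemma PS.asymm (P : Prestreak X) {a b : X} (h : P.lt a b) : ¬ P.lt b a :=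
  fun h' => P.lt_asymm a b ⟨h, h'⟩

lemma PS.lt_of_lt_of_nlt (P : Prestreak X) {a b c : X}
    (h : P.lt a b) (h2 : ¬ P.lt c b) : P.lt a c :=
  (P.lt_cotrans a b c h).resolve_right h2

lemma PS.zero_add (P : Prestreak X) (a : X) : P.add P.zero a = a := by
  rw [P.add_comm]; exact P.add_zero a

lemma PS.absorb (P : Prestreak X) {w : X} (hw : P.add w w = w) (a z : X) :
    P.add (P.add w a) (P.add z w) = P.add a (P.add z w) := by
  rw [P.add_comm w a, P.add_assoc]
  congr 1
  rw [← P.add_assoc, P.add_comm w z, P.add_assoc, hw]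

lemma PS.cancel_uv (P : Prestreak X) {u v A B : X}
    (hu : P.add u u = u) (hv : P.add v v = v)
    (h : P.lt (P.add v A) (P.add B u)) : P.lt A B := by
  have h2 := (P.add_lt_add_iff _ _ (P.add u v)).mpr h
  have e1 : P.add (P.add v A) (P.add u v) = P.add A (P.add u v) :=
    PS.absorb P hv A u
  have e2 : P.add (P.add B u) (P.add u v) = P.add B (P.add u v) := by
    rw [P.add_comm B u, P.add_comm u v]; exact PS.absorb P hu B v
  rw [e1, e2] at h2
  exact (P.add_lt_add_iff _ _ _).mp h2

lemma PS.idem (P : Prestreak X) {tmul : X → X → X}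
    (hM : P.IsMultiplicative tmul) (y : X) :
    P.add (tmul y P.zero) (tmul y P.zero) = tmul y P.zero := by
  obtain ⟨hcomm, -, hdist, -, -, -⟩ := hM
  calc P.add (tmul y P.zero) (tmul y P.zero)
      = P.add (tmul P.zero y) (tmul P.zero y) := by rw [hcomm y P.zero]
    _ = tmul (P.add P.zero P.zero) y := (hdist _ _ _).symm
    _ = tmul P.zero y := by rw [P.add_zero]
    _ = tmul y P.zero := hcomm _ _

lemma PS.fwd_pos (P : Prestreak X) {tmul : X → X → X}
    (hM : P.IsMultiplicative tmul) {a b x : X}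
    (hx : P.lt P.zero x) (hab : P.lt a b) : P.lt (tmul a x) (tmul b x) := by
  have h := hM.2.2.2.2.2 b a x P.zero hab hx
  -- h : P.lt (P.add (tmul b P.zero) (tmul a x)) (P.add (tmul b x) (tmul a P.zero))
  exact PS.cancel_uv P (PS.idem P hM a) (PS.idem P hM b) h

lemma PS.fwd_neg (P : Prestreak X) {tmul : X → X → X}
    (hM : P.IsMultiplicative tmul) {a b x : X}
    (hx : P.lt x P.zero) (hab : P.lt a b) : P.lt (tmul b x) (tmul a x) := by
  have h := hM.2.2.2.2.2 b a P.zero x hab hx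
  -- h : lt (add (tmul b x) (tmul a zero)) (add (tmul b zero) (tmul a x))
  rw [P.add_comm (tmul b x) (tmul a P.zero),
      P.add_comm (tmul b P.zero) (tmul a x)] at h
  exact PS.cancel_uv P (PS.idem P hM b) (PS.idem P hM a) h

lemma PS.nsmul_descent (P : Prestreak X) :
    ∀ (n : ℕ) {a b : X}, P.lt (P.nsmul n a) (P.nsmul n b) → P.lt a b := by
  intro n
  induction n with
  | zero => intro a b h; exact absurd h (PS.irrefl P _)
  | succ n ih =>
    intro a b h
    have h' : P.lt (P.add (P.nsmul n a) a) (P.add (P.nsmul n b) b) := h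
    rcases P.lt_cotrans _ _ (P.add (P.nsmul n a) b) h' with h1 | h2
    · rw [P.add_comm (P.nsmul n a) a, P.add_comm (P.nsmul n a) b] at h1
      exact (P.add_lt_add_iff _ _ _).mp h1
    · exact ih ((P.add_lt_add_iff _ _ _).mp h2)

lemma PS.tmul_nsmul (P : Prestreak X) {tmul : X → X → X}
    (hM : P.IsMultiplicative tmul) (a x : X) :
    ∀ n : ℕ, tmul (P.nsmul n a) x
      = P.add (tmul P.zero x) (P.nsmul n (tmul a x)) := by
  intro n
  induction n with
  | zero => exact (P.add_zero _).symm
  | succ n ih =>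
    show tmul (P.add (P.nsmul n a) a) x = _
    rw [hM.2.2.1, ih, P.add_assoc]
    rfl

lemma PS.key_ineq (P : Prestreak X) {tmul : X → X → X}
    (hM : P.IsMultiplicative tmul) (a b x : X) (n : ℕ)
    (hn : P.lt (P.add x (P.nsmul n (tmul a x))) (P.nsmul n (tmul b x))) :
    P.lt (tmul (P.add P.one (P.nsmul n a)) x) (tmul (P.nsmul n b) x) := by
  have e0 : tmul P.one x = x := by rw [hM.1 P.one x, hM.2.2.2.1]
  have e1 : tmul (P.add P.one (P.nsmul n a)) x
      = P.add (tmul P.zero x) (P.add x (P.nsmul n (tmul a x))) := by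
    rw [hM.2.2.1, e0, PS.tmul_nsmul P hM, ← P.add_assoc,
        P.add_comm x (tmul P.zero x), P.add_assoc]
  rw [e1, PS.tmul_nsmul P hM]
  rw [P.add_comm (tmul P.zero x) (P.add x (P.nsmul n (tmul a x))),
      P.add_comm (tmul P.zero x) (P.nsmul n (tmul b x))]
  exact (P.add_lt_add_iff _ _ _).mpr hn

lemma PS.step_lt (P : Prestreak X) (n : ℕ) (a : X) :
    P.lt (P.nsmul n a) (P.add P.one (P.nsmul n a)) := by
  have h := (P.add_lt_add_iff P.zero P.one (P.nsmul n a)).mpr P.zero_lt_one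
  rwa [PS.zero_add] at h

lemma PS.rev_pos (P : Prestreak X) {tmul : X → X → X}
    (hM : P.IsMultiplicative tmul) (hA : P.Archimedean) {a b x : X}
    (hx : P.lt P.zero x) (h : P.lt (tmul a x) (tmul b x)) : P.lt a b := by
  obtain ⟨n, hn⟩ := hA x (tmul a x) P.zero (tmul b x) h
  rw [PS.zero_add] at hn
  have key := PS.key_ineq P hM a b x n hn
  have hnot : ¬ P.lt (P.nsmul n b) (P.add P.one (P.nsmul n a)) :=
    fun hq => PS.asymm P key (PS.fwd_pos P hM hx hq)
  exact PS.nsmul_descent P n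
    (PS.lt_of_lt_of_nlt P (PS.step_lt P n a) hnot)

lemma PS.rev_neg (P : Prestreak X) {tmul : X → X → X}
    (hM : P.IsMultiplicative tmul) (hA : P.Archimedean) {a b x : X}
    (hx : P.lt x P.zero) (h : P.lt (tmul b x) (tmul a x)) : P.lt a b := by
  obtain ⟨n, hn⟩ := hA P.zero (tmul b x) x (tmul a x) h
  rw [PS.zero_add] at hn
  -- hn : P.lt (P.nsmul n (tmul b x)) (P.add x (P.nsmul n (tmul a x)))
  have key : P.lt (tmul (P.nsmul n b) x) (tmul (P.add P.one (P.nsmul n a)) x) := by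
    have e0 : tmul P.one x = x := by rw [hM.1 P.one x, hM.2.2.2.1]
    have e1 : tmul (P.add P.one (P.nsmul n a)) x
        = P.add (tmul P.zero x) (P.add x (P.nsmul n (tmul a x))) := by
      rw [hM.2.2.1, e0, PS.tmul_nsmul P hM, ← P.add_assoc,
          P.add_comm x (tmul P.zero x), P.add_assoc]
    rw [e1, PS.tmul_nsmul P hM]
    rw [P.add_comm (tmul P.zero x) (P.add x (P.nsmul n (tmul a x))),
        P.add_comm (tmul P.zero x) (P.nsmul n (tmul b x))]
    exact (P.add_lt_add_iff _ _ _).mpr hn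
  have hnot : ¬ P.lt (P.nsmul n b) (P.add P.one (P.nsmul n a)) :=
    fun hq => PS.asymm P key (PS.fwd_neg P hM hx hq)
  exact PS.nsmul_descent P n
    (PS.lt_of_lt_of_nlt P (PS.step_lt P n a) hnot)

end Helpers

/-- In a multiplicative archimedean prestreak, multiplication by a positive
element preserves and reflects `<`, and multiplication by a negative element
reverses it. -/
theorem mul_lt_iff_of_sign {X : Type*} (P : Prestreak X)
    (tmul : X → X → X) (hM : P.IsMultiplicative tmul) (hA : P.Archimedean)
    (a b x : X) :
    (P.lt P.zero x → (P.lt a b ↔ P.lt (tmul a x) (tmul b x))) ∧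
    (P.lt x P.zero → (P.lt a b ↔ P.lt (tmul b x) (tmul a x))) := by
  constructor
  · intro hx
    exact ⟨PS.fwd_pos P hM hx, PS.rev_pos P hM hA hx⟩
  · intro hx
    exact ⟨PS.fwd_neg P hM hx, PS.rev_neg P hM hA hx⟩
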